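/- Let θ₂^∞, θ₃^∞ ∈ ℂ with θ₂^∞+θ₃^∞ = 0. Let I ⊆ ℝ be an open interval and let q₁,q₂,p₁,p₂,u : I → ℂ be differentiable with u(t) ≠ 0. Define Q(t) = [[q₁, u],[−q₂/u, q₁]], P(t) = [[p₁/2, −p₂u],[(p₂q₂−θ₂^∞)/u, p₁/2]]. Define A₀ = [[O, I],[O, O]], A₁(t) = [[O, Q],[I, O]], A₂(t) = [[−P, Q²+t],[−Q, P]], B₁(t) = [[O, 2Q],[I, O]], and A(x,t) = A₀x² + A₁x + A₂, B(x,t) = A₀x + B₁. Then the zero-curvature equation ∂A/∂t − ∂B/∂x + [A, B] = O holds for all t ∈ I and all x ∈ ℂ if and only if Q′ = 2P and P′ = 3Q² + t hold on I. -/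

import Mathlib

/-!
The Lax pair of spectral type (((((11)))))₂ (singularity pattern 7/2):
the zero-curvature equation is equivalent to the matrix first Painlevé system
`Q′ = 2P`, `P′ = 3Q² + t`.
-/

open Matrix

noncomputable section

/-- Entrywise derivative of a matrix-valued function of a real variable. -/
def matDeriv {m n : Type*} (F : ℝ → Matrix m n ℂ) (t : ℝ) : Matrix m n ℂ :=
  Matrix.of fun i j => deriv (fun s => F s i j) t

/-- `Q = [[q₁, u],[−q₂/u, q₁]]`. -/
def Qf (q1 q2 u : ℝ → ℂ) (t : ℝ) : Matrix (Fin 2) (Fin 2) ℂ :=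
  !![q1 t, u t; -(q2 t)/(u t), q1 t]

/-- `P = [[p₁/2, −p₂u],[(p₂q₂−θ)/u, p₁/2]]`. -/
def Pf (p1 p2 q2 : ℝ → ℂ) (θ : ℂ) (u : ℝ → ℂ) (t : ℝ) : Matrix (Fin 2) (Fin 2) ℂ :=
  !![p1 t/2, -(p2 t)*(u t); ((p2 t)*(q2 t) - θ)/(u t), p1 t/2]

/-- `A₀ = [[O, I],[O, O]]`. -/
def A0c : Matrix (Fin 2 ⊕ Fin 2) (Fin 2 ⊕ Fin 2) ℂ := fromBlocks 0 1 0 0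

/-- `A₁(t) = [[O, Q],[I, O]]`. -/
def A1f (Q : Matrix (Fin 2) (Fin 2) ℂ) : Matrix (Fin 2 ⊕ Fin 2) (Fin 2 ⊕ Fin 2) ℂ :=
  fromBlocks 0 Q 1 0

/-- `A₂(t) = [[−P, Q²+t],[−Q, P]]`. -/
def A2f (Q P : Matrix (Fin 2) (Fin 2) ℂ) (t : ℂ) : Matrix (Fin 2 ⊕ Fin 2) (Fin 2 ⊕ Fin 2) ℂ :=
  fromBlocks (-P) (Q * Q + t • (1 : Matrix (Fin 2) (Fin 2) ℂ)) (-Q) P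

/-- `B₁(t) = [[O, 2Q],[I, O]]`. -/
def B1f (Q : Matrix (Fin 2) (Fin 2) ℂ) : Matrix (Fin 2 ⊕ Fin 2) (Fin 2 ⊕ Fin 2) ℂ :=
  fromBlocks 0 ((2:ℂ) • Q) 1 0

/-- `A(x,t) = A₀x² + A₁x + A₂`. -/
def Afun (Q P : ℝ → Matrix (Fin 2) (Fin 2) ℂ) (x : ℂ) (t : ℝ) :
    Matrix (Fin 2 ⊕ Fin 2) (Fin 2 ⊕ Fin 2) ℂ :=
  (x ^ 2) • A0c + x • A1f (Q t) + A2f (Q t) (P t) (t : ℂ)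

/-- `B(x,t) = A₀x + B₁`. -/
def Bfun (Q : ℝ → Matrix (Fin 2) (Fin 2) ℂ) (x : ℂ) (t : ℝ) :
    Matrix (Fin 2 ⊕ Fin 2) (Fin 2 ⊕ Fin 2) ℂ :=
  x • A0c + B1f (Q t)


lemma comm_lemma' (Q P : ℝ → Matrix (Fin 2) (Fin 2) ℂ) (x : ℂ) (t : ℝ) :
    A0c - (Afun Q P x t * Bfun Q x t - Bfun Q x t * Afun Q P x t)
    = fromBlocks (-((3:ℂ) • (Q t * Q t) + (t:ℂ) • 1))
        (1 + (2*x) • P t + (2:ℂ) • (P t * Q t + Q t * P t))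
        (-((2:ℂ) • P t)) ((3:ℂ) • (Q t * Q t) + (t:ℂ) • 1) := by
  simp only [Afun, Bfun]
  simp only [A0c, A1f, A2f, B1f, Matrix.add_mul, Matrix.mul_add, smul_mul_assoc,
    mul_smul_comm, fromBlocks_multiply, fromBlocks_smul, fromBlocks_add, fromBlocks_neg,
    sub_eq_add_neg, Matrix.mul_zero, Matrix.zero_mul, Matrix.mul_one, Matrix.one_mul,
    smul_zero, add_zero, zero_add, neg_add_rev, neg_neg, smul_neg, Matrix.neg_mul,
    Matrix.mul_neg, smul_smul]
  rw [fromBlocks_inj]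
  refine ⟨?_, ?_, ?_, ?_⟩ <;> module

lemma matDeriv_Afun (Q P : ℝ → Matrix (Fin 2) (Fin 2) ℂ) (t : ℝ) (x : ℂ)
    (hQ : ∀ i j, DifferentiableAt ℝ (fun s => Q s i j) t)
    (hP : ∀ i j, DifferentiableAt ℝ (fun s => P s i j) t) :
    matDeriv (fun s => Afun Q P x s) t
      = x • fromBlocks 0 (matDeriv Q t) 0 0
        + fromBlocks (-(matDeriv P t)) (matDeriv Q t * Q t + Q t * matDeriv Q t + 1)
            (-(matDeriv Q t)) (matDeriv P t) := by
  ext i j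
  rcases i with a | a <;> rcases j with b | b <;>
    simp only [matDeriv, Afun, A0c, A1f, A2f, Matrix.of_apply, Matrix.add_apply,
      Matrix.smul_apply, fromBlocks_apply₁₁, fromBlocks_apply₁₂, fromBlocks_apply₂₁,
      fromBlocks_apply₂₂, Matrix.zero_apply, Matrix.neg_apply, Matrix.one_apply,
      smul_zero, zero_add, add_zero, smul_eq_mul, mul_zero, Matrix.mul_apply,
      Fin.sum_univ_two]
  · exact deriv.neg
  · have hs : HasDerivAt (fun s : ℝ => (s : ℂ)) 1 t := by
      simpa using (hasDerivAt_id t).ofReal_comp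
    have H : HasDerivAt
        (fun s =>
          (x ^ 2 * if a = b then 1 else 0) + x * Q s a b +
            (Q s a 0 * Q s 0 b + Q s a 1 * Q s 1 b + ↑s * if a = b then 1 else 0))
        (0 + x * deriv (fun s => Q s a b) t +
          ((deriv (fun s => Q s a 0) t * Q t 0 b + Q t a 0 * deriv (fun s => Q s 0 b) t) +
            (deriv (fun s => Q s a 1) t * Q t 1 b + Q t a 1 * deriv (fun s => Q s 1 b) t) +
            (1 * if a = b then 1 else 0))) t := by
      exact ((hasDerivAt_const t _).add (((hQ a b).hasDerivAt).const_mul x)).add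
        (((((hQ a 0).hasDerivAt).mul ((hQ 0 b).hasDerivAt)).add
          (((hQ a 1).hasDerivAt).mul ((hQ 1 b).hasDerivAt))).add (hs.mul_const _))
    rw [H.deriv]; ring
  · have H : HasDerivAt (fun s => (x * if a = b then 1 else 0) + -Q s a b)
        (0 + -deriv (fun s => Q s a b) t) t :=
      (hasDerivAt_const t _).add ((hQ a b).hasDerivAt).neg
    rw [H.deriv]; ring

theorem lax_pair_matrix_PI
    (θi2 θi3 : ℂ) (hFuchs : θi2 + θi3 = 0)
    (α β : ℝ)
    (q1 q2 p1 p2 u : ℝ → ℂ)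
    (hdiff : ∀ t ∈ Set.Ioo α β, DifferentiableAt ℝ q1 t ∧ DifferentiableAt ℝ q2 t ∧
      DifferentiableAt ℝ p1 t ∧ DifferentiableAt ℝ p2 t ∧ DifferentiableAt ℝ u t)
    (hu : ∀ t ∈ Set.Ioo α β, u t ≠ 0)
    (Q P : ℝ → Matrix (Fin 2) (Fin 2) ℂ)
    (hQ : Q = Qf q1 q2 u) (hP : P = Pf p1 p2 q2 θi2 u) :
    -- zero curvature:  ∂A/∂t − ∂B/∂x + [A,B] = O
    (∀ t ∈ Set.Ioo α β, ∀ x : ℂ,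
        matDeriv (fun s => Afun Q P x s) t
          = A0c - (Afun Q P x t * Bfun Q x t - Bfun Q x t * Afun Q P x t))
    ↔
    -- `Q′ = 2P` and `P′ = 3Q² + t`
    ((∀ t ∈ Set.Ioo α β, matDeriv Q t = (2:ℂ) • P t) ∧
      (∀ t ∈ Set.Ioo α β,
        matDeriv P t = (3:ℂ) • (Q t * Q t) + (t : ℂ) • (1 : Matrix (Fin 2) (Fin 2) ℂ))) := by
  subst hQ hP
  have hQd : ∀ t ∈ Set.Ioo α β, ∀ i j : Fin 2,
      DifferentiableAt ℝ (fun s => Qf q1 q2 u s i j) t := by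
    intro t ht i j
    obtain ⟨h1, h2, h3, h4, h5⟩ := hdiff t ht
    fin_cases i <;> fin_cases j <;>
      simp only [Qf, Matrix.cons_val', Matrix.cons_val_zero, Matrix.cons_val_one,
        Matrix.head_cons, Matrix.empty_val', Matrix.cons_val_fin_one, Matrix.head_fin_const]
    · exact h1
    · exact h5
    · exact h2.neg.div h5 (hu t ht)
    · exact h1
  have hPd : ∀ t ∈ Set.Ioo α β, ∀ i j : Fin 2,
      DifferentiableAt ℝ (fun s => Pf p1 p2 q2 θi2 u s i j) t := by
    intro t ht i j
    obtain ⟨h1, h2, h3, h4, h5⟩ := hdiff t ht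
    fin_cases i <;> fin_cases j <;>
      simp only [Pf, Matrix.cons_val', Matrix.cons_val_zero, Matrix.cons_val_one,
        Matrix.head_cons, Matrix.empty_val', Matrix.cons_val_fin_one, Matrix.head_fin_const]
    · exact h3.div_const 2
    · exact h4.neg.mul h5
    · exact ((h4.mul h2).sub_const θi2).div h5 (hu t ht)
    · exact h3.div_const 2
  set Q := Qf q1 q2 u with hQdef
  set P := Pf p1 p2 q2 θi2 u with hPdef
  constructor
  · intro h
    constructor
    · intro t ht
      have h0 := h t ht 0
      rw [matDeriv_Afun Q P t 0 (hQd t ht) (hPd t ht), comm_lemma'] at h0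
      rw [zero_smul, zero_add, fromBlocks_inj] at h0
      exact neg_injective h0.2.2.1
    · intro t ht
      have h0 := h t ht 0
      rw [matDeriv_Afun Q P t 0 (hQd t ht) (hPd t ht), comm_lemma'] at h0
      rw [zero_smul, zero_add, fromBlocks_inj] at h0
      exact h0.2.2.2
  · rintro ⟨h1, h2⟩ t ht x
    rw [matDeriv_Afun Q P t x (hQd t ht) (hPd t ht), comm_lemma', h1 t ht, h2 t ht,
      fromBlocks_smul, fromBlocks_add, fromBlocks_inj]
    refine ⟨?_, ?_, ?_, ?_⟩ <;>
      simp only [smul_mul_assoc, mul_smul_comm, smul_smul, smul_zero] <;> module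


end
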